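/- Define the [DBH-SU] critical values by τ_m = max{t ∈ A : F_i(t) < 1 for all i, and (1/m)·Σ_{i=1}^m F_i(t)/(1−F_i(t)) ≤ α} and, for 1 ≤ k ≤ m−1, τ_k = max{t ∈ A : t ≤ τ_m and (1/m)·Σ_{i=1}^m F_i(t)/(1−F_i(τ_m)) ≤ αk/m}. Then the rejection set of the step-up procedure SU(τ) contains the rejection set of the step-up procedure with the Benjamini–Hochberg critical values at level α/(1+α), i.e. ξ_k = (α/(1+α))·k/m for 1 ≤ k ≤ m. -/

import Mathlib

open MeasureTheory ProbabilityTheory Finset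

/-- Number of rejections of the step-up procedure with critical values `τ 1, …, τ m`
(convention `τ 0 = 0`): the largest `k ∈ {0, …, m}` such that at least `k` of the
p-values are `≤ τ k`. -/
noncomputable def numRejSU (m : ℕ) (τ : ℕ → ℝ) (q : Fin m → ℝ) : ℕ :=
  sSup {k | k ≤ m ∧ k ≤ (univ.filter (fun j => q j ≤ τ k)).card}

/-- Rejection set of the step-up procedure. -/
noncomputable def rejSU (m : ℕ) (τ : ℕ → ℝ) (q : Fin m → ℝ) : Finset (Fin m) :=
  univ.filter (fun i => q i ≤ τ (numRejSU m τ q))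

private lemma ratio_mono {x y : ℝ} (hx : 0 ≤ x) (hxy : x ≤ y) (hy : y < 1) :
    x / (1 - x) ≤ y / (1 - y) := by
  rw [div_le_div_iff₀ (by linarith) (by linarith)]
  nlinarith

/-- [DBH-SU] rejects at least as much as BH at level `α/(1+α)`. -/
theorem DBH_SU_rejects_more_than_BH_shrunk
    (m : ℕ) (hm : 1 ≤ m) (α : ℝ) (hα : α ∈ Set.Ioo (0 : ℝ) 1)
    (A : Finset ℝ) (hA0 : (0 : ℝ) ∈ A) (hA : ∀ t ∈ A, t ∈ Set.Icc (0 : ℝ) 1)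
    (p : Fin m → ℝ) (hp : ∀ i, p i ∈ A)
    (F : Fin m → ℝ → ℝ)
    (hFmono : ∀ i, MonotoneOn (F i) (Set.Icc 0 1))
    (hFrange : ∀ i, ∀ t ∈ Set.Icc (0 : ℝ) 1, F i t ∈ Set.Icc (0 : ℝ) 1)
    (hF0 : ∀ i, F i 0 = 0) (hF1 : ∀ i, F i 1 = 1)
    (hFsup : ∀ i, ∀ t ∈ Set.Icc (0 : ℝ) 1, F i t ≤ t)
    (τ : ℕ → ℝ) (hτ0 : τ 0 = 0)
    (hτm : IsGreatest {t : ℝ | t ∈ A ∧ (∀ i, F i t < 1) ∧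
      (1 / (m : ℝ)) * ∑ i : Fin m, F i t / (1 - F i t) ≤ α} (τ m))
    (hτk : ∀ k, 1 ≤ k → k < m → IsGreatest {t : ℝ | t ∈ A ∧ t ≤ τ m ∧
      (1 / (m : ℝ)) * ∑ i : Fin m, F i t / (1 - F i (τ m)) ≤ α * k / m} (τ k))
    :
    rejSU m (fun k => (α / (1 + α)) * k / m) p ⊆ rejSU m τ p := by
  obtain ⟨hα0, hα1⟩ := hα
  have hm0 : (0:ℝ) < m := by exact_mod_cast hm
  have h1α : (0:ℝ) < 1 + α := by linarith
  set ξ : ℕ → ℝ := fun k => α / (1 + α) * k / m with hξdef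
  have hξnn : ∀ k, 0 ≤ ξ k := fun k => by
    have : (0:ℝ) ≤ (k:ℝ) := Nat.cast_nonneg k
    positivity
  have hξmono : ∀ k l : ℕ, k ≤ l → ξ k ≤ ξ l := by
    intro k l hkl
    have : (k:ℝ) ≤ l := by exact_mod_cast hkl
    have hαα : 0 ≤ α / (1 + α) := by positivity
    simp only [hξdef]
    apply div_le_div_of_nonneg_right (by nlinarith) hm0.le |>.trans_eq rfl
  have hξlt1 : ∀ k, k ≤ m → ξ k ≤ α / (1 + α) := by
    intro k hk
    have hk' : (k:ℝ) ≤ m := by exact_mod_cast hk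
    have hαα : 0 ≤ α / (1 + α) := by positivity
    calc ξ k = α / (1 + α) * ((k:ℝ) / m) := by simp only [hξdef]; ring
    _ ≤ α / (1 + α) * 1 := by
        apply mul_le_mul_of_nonneg_left _ hαα
        rw [div_le_one hm0]; exact hk'
    _ = α / (1 + α) := mul_one _
  -- facts about τ m
  have hτmA := hτm.1.1
  have hτmF := hτm.1.2.1
  have hτmS := hτm.1.2.2
  have hτm01 := hA _ hτmA
  -- key lemma: reaching τ m
  have Lm : ∀ a ∈ A, a ≤ α / (1 + α) → a ≤ τ m := by
    intro a haA hale
    apply hτm.2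
    have ha01 := hA _ haA
    have hFa : ∀ i, F i a ≤ a := fun i => hFsup i a ha01
    have hFa0 : ∀ i, 0 ≤ F i a := fun i => (hFrange i a ha01).1
    have halt1 : a < 1 := by
      have : α / (1 + α) < 1 := by rw [div_lt_one h1α]; linarith
      linarith
    refine ⟨haA, fun i => lt_of_le_of_lt (hFa i) halt1, ?_⟩
    have hterm : ∀ i : Fin m, F i a / (1 - F i a) ≤ α := by
      intro i
      calc F i a / (1 - F i a) ≤ a / (1 - a) :=
            ratio_mono (hFa0 i) (hFa i) halt1
      _ ≤ (α / (1 + α)) / (1 - α / (1 + α)) :=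
            ratio_mono ha01.1 hale (by rw [div_lt_one h1α]; linarith)
      _ = α := by field_simp; ring
    calc (1 / (m : ℝ)) * ∑ i : Fin m, F i a / (1 - F i a)
        ≤ (1 / (m : ℝ)) * ∑ _i : Fin m, α := by
          apply mul_le_mul_of_nonneg_left (Finset.sum_le_sum fun i _ => hterm i)
          positivity
    _ = α := by
          rw [Finset.sum_const, Finset.card_univ, Fintype.card_fin, nsmul_eq_mul]
          field_simp
  have hτm0 : 0 ≤ τ m := Lm 0 hA0 (by positivity)
  have hFτm0 : ∀ i, 0 ≤ F i (τ m) := fun i => (hFrange i _ hτm01).1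
  -- sum of 1/(1 - F i (τ m)) bound
  have hinv : ∑ i : Fin m, 1 / (1 - F i (τ m)) ≤ (m : ℝ) * (1 + α) := by
    have h1 : ∀ i : Fin m, 1 / (1 - F i (τ m)) = 1 + F i (τ m) / (1 - F i (τ m)) := by
      intro i
      have : (0:ℝ) < 1 - F i (τ m) := by linarith [hτmF i]
      field_simp; ring
    have h2 : ∑ i : Fin m, F i (τ m) / (1 - F i (τ m)) ≤ (m:ℝ) * α := by
      have := hτmS
      rw [div_mul_eq_mul_div, one_mul, div_le_iff₀ hm0] at this
      linarith
    calc ∑ i : Fin m, 1 / (1 - F i (τ m))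
        = ∑ i : Fin m, (1 + F i (τ m) / (1 - F i (τ m))) := by
          exact Finset.sum_congr rfl fun i _ => h1 i
    _ = (m:ℝ) + ∑ i : Fin m, F i (τ m) / (1 - F i (τ m)) := by
          rw [Finset.sum_add_distrib, Finset.sum_const, Finset.card_univ,
            Fintype.card_fin, nsmul_eq_mul, mul_one]
    _ ≤ (m:ℝ) + (m:ℝ) * α := by linarith
    _ = (m:ℝ) * (1 + α) := by ring
  -- key lemma: for 1 ≤ k ≤ m, a ∈ A, a ≤ ξ k → a ≤ τ k
  have L : ∀ k, 1 ≤ k → k ≤ m → ∀ a ∈ A, a ≤ ξ k → a ≤ τ k := by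
    intro k hk1 hkm a haA hale
    rcases eq_or_lt_of_le hkm with rfl | hklt
    · exact Lm a haA (hale.trans (hξlt1 _ le_rfl))
    · apply (hτk k hk1 hklt).2
      have ha01 := hA _ haA
      have hFa : ∀ i, F i a ≤ a := fun i => hFsup i a ha01
      have hτmle : a ≤ τ m := Lm a haA (hale.trans (hξlt1 _ hkm))
      refine ⟨haA, hτmle, ?_⟩
      have hterm : ∀ i : Fin m, F i a / (1 - F i (τ m)) ≤ a * (1 / (1 - F i (τ m))) := by
        intro i
        have hd : (0:ℝ) < 1 - F i (τ m) := by linarith [hτmF i]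
        rw [mul_one_div]
        exact div_le_div_of_nonneg_right (hFa i) hd.le |>.trans_eq rfl
      calc (1 / (m : ℝ)) * ∑ i : Fin m, F i a / (1 - F i (τ m))
          ≤ (1 / (m : ℝ)) * ∑ i : Fin m, a * (1 / (1 - F i (τ m))) := by
            apply mul_le_mul_of_nonneg_left (Finset.sum_le_sum fun i _ => hterm i)
            positivity
      _ = (1 / (m : ℝ)) * (a * ∑ i : Fin m, 1 / (1 - F i (τ m))) := by
            rw [Finset.mul_sum, Finset.mul_sum, Finset.mul_sum]
      _ ≤ (1 / (m : ℝ)) * (a * ((m:ℝ) * (1 + α))) := by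
            apply mul_le_mul_of_nonneg_left _ (by positivity)
            exact mul_le_mul_of_nonneg_left hinv ha01.1
      _ = a * (1 + α) := by field_simp
      _ ≤ ξ k * (1 + α) := by nlinarith
      _ = α * k / m := by simp only [hξdef]; field_simp
  -- nonnegativity of τ k
  have hτnn : ∀ k, k ≤ m → 0 ≤ τ k := by
    intro k hkm
    rcases Nat.eq_zero_or_pos k with rfl | hk1
    · rw [hτ0]
    · exact L k hk1 hkm 0 hA0 (hξnn k)
  -- monotonicity of τ on [1, m]
  have hτmono : ∀ k l, 1 ≤ k → k ≤ l → l ≤ m → τ k ≤ τ l := by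
    intro k l hk1 hkl hlm
    rcases eq_or_lt_of_le hlm with rfl | hllt
    · rcases eq_or_lt_of_le hkl with rfl | hklt
      · exact le_rfl
      · exact (hτk k hk1 hklt).1.2.1
    · have hklt : k < m := lt_of_le_of_lt hkl hllt
      apply (hτk l (hk1.trans hkl) hllt).2
      obtain ⟨h1, h2, h3⟩ := (hτk k hk1 hklt).1
      refine ⟨h1, h2, h3.trans ?_⟩
      have : (k:ℝ) ≤ l := by exact_mod_cast hkl
      apply div_le_div_of_nonneg_right _ hm0.le
      nlinarith
  -- main argument
  intro i hi
  simp only [rejSU, mem_filter, mem_univ, true_and] at hi ⊢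
  set K := numRejSU m ξ p with hK
  set K' := numRejSU m τ p with hK'
  have hbddξ : BddAbove {k | k ≤ m ∧ k ≤ (univ.filter (fun j => p j ≤ ξ k)).card} :=
    ⟨m, fun k hk => hk.1⟩
  have hbddτ : BddAbove {k | k ≤ m ∧ k ≤ (univ.filter (fun j => p j ≤ τ k)).card} :=
    ⟨m, fun k hk => hk.1⟩
  have hKmem : K ∈ {k | k ≤ m ∧ k ≤ (univ.filter (fun j => p j ≤ ξ k)).card} :=
    Nat.sSup_mem ⟨0, by simp⟩ hbddξ
  have hK'mem : K' ∈ {k | k ≤ m ∧ k ≤ (univ.filter (fun j => p j ≤ τ k)).card} :=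
    Nat.sSup_mem ⟨0, by simp⟩ hbddτ
  have hKm : K ≤ m := hKmem.1
  have hK'm : K' ≤ m := hK'mem.1
  rcases Nat.eq_zero_or_pos K with hK0 | hK1
  · -- K = 0 : p i = 0
    rw [hK0] at hi
    have hξ00 : ξ 0 = 0 := by simp [hξdef]
    rw [hξ00] at hi
    have hpi0 : p i = 0 := le_antisymm hi (hA _ (hp i)).1
    rw [hpi0]
    exact hτnn K' hK'm
  · -- K ≥ 1
    have hsub : (univ.filter (fun j => p j ≤ ξ K)) ⊆ (univ.filter (fun j => p j ≤ τ K)) := by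
      intro j hj
      simp only [mem_filter, mem_univ, true_and] at hj ⊢
      exact L K hK1 hKm (p j) (hp j) hj
    have hKτmem : K ∈ {k | k ≤ m ∧ k ≤ (univ.filter (fun j => p j ≤ τ k)).card} :=
      ⟨hKm, hKmem.2.trans (Finset.card_le_card hsub)⟩
    have hKK' : K ≤ K' := le_csSup hbddτ hKτmem
    calc p i ≤ τ K := L K hK1 hKm (p i) (hp i) hi
    _ ≤ τ K' := hτmono K K' hK1 hKK' hK'm
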